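/- Let G be a connected simple graph on n ≥ 3 vertices, let M be a maximal matching of G, and let A be a maximal independent set of G contained in the union of the edges of M. Then the neighborhood N_G(A) is a vertex cover of G. -/

import Mathlib

open MvPolynomial

namespace PaperRV

variable {V : Type*}

/-- `A` is an independent set of `G`. -/
def IsIndep (G : SimpleGraph V) (A : Set V) : Prop :=
  ∀ u ∈ A, ∀ v ∈ A, ¬ G.Adj u v

/-- The neighbourhood `N_G(A)` of a set of vertices `A`. -/
def nbhd (G : SimpleGraph V) (A : Set V) : Set V :=
  {v | ∃ u ∈ A, G.Adj u v}

/-- `C` is a vertex cover of `G`. -/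
def IsVertexCover (G : SimpleGraph V) (C : Set V) : Prop :=
  ∀ ⦃u v⦄, G.Adj u v → u ∈ C ∨ v ∈ C

/-- `M` is a matching of `G`: a set of pairwise disjoint edges. -/
def IsMatching (G : SimpleGraph V) (M : Finset (Sym2 V)) : Prop :=
  (↑M : Set (Sym2 V)) ⊆ G.edgeSet ∧
    ∀ e ∈ M, ∀ f ∈ M, e ≠ f → ∀ v : V, v ∈ e → v ∉ f

/-- `M` is a maximal matching of `G`. -/
def IsMaximalMatching (G : SimpleGraph V) (M : Finset (Sym2 V)) : Prop :=
  IsMatching G M ∧ ∀ M', IsMatching G M' → M ⊆ M' → M' = M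

/-- `M` is an induced matching of `G`: the only edges of `G` contained in the union
of the edges of `M` are those of `M`. -/
def IsInducedMatching (G : SimpleGraph V) (M : Finset (Sym2 V)) : Prop :=
  IsMatching G M ∧ ∀ e ∈ G.edgeSet, (∀ v ∈ e, ∃ f ∈ M, v ∈ f) → e ∈ M

/-- If `M` is a maximal matching of a connected graph `G` on `n ≥ 3` vertices and `A` is a
maximal independent set of `G` contained in the union of the edges of `M`, then `N_G(A)` is a
vertex cover of `G`. -/
theorem stmt0 {V : Type*} [Fintype V] (G : SimpleGraph V) (hn : 3 ≤ Fintype.card V)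
    (hG : G.Connected) (M : Finset (Sym2 V)) (hM : IsMaximalMatching G M)
    (A : Set V) (hAsub : A ⊆ {v | ∃ e ∈ M, v ∈ e}) (hAind : IsIndep G A)
    (hAmax : ∀ B : Set V, B ⊆ {v | ∃ e ∈ M, v ∈ e} → IsIndep G B → A ⊆ B → B = A) :
    IsVertexCover G (nbhd G A) := by
  classical
  -- Key: any vertex covered by M is in A or in nbhd G A.
  have key : ∀ w ∈ {v | ∃ e ∈ M, v ∈ e}, w ∈ A ∨ w ∈ nbhd G A := by
    intro w hw
    by_cases hwA : w ∈ A
    · exact Or.inl hwA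
    right
    by_cases hind : IsIndep G (insert w A)
    · exfalso
      have := hAmax (insert w A)
        (by intro x hx; rcases hx with rfl | hx; exact hw; exact hAsub hx)
        hind (Set.subset_insert _ _)
      exact hwA (this ▸ Set.mem_insert w A)
    · unfold IsIndep at hind
      push_neg at hind
      obtain ⟨u, hu, v, hv, hadj⟩ := hind
      rcases Set.mem_insert_iff.mp hu with h1 | h1
      · rcases Set.mem_insert_iff.mp hv with h2 | h2
        · subst h1; subst h2; exact absurd hadj (G.loopless.irrefl _)
        · subst h1; exact ⟨v, h2, hadj.symm⟩
      · rcases Set.mem_insert_iff.mp hv with h2 | h2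
        · subst h2; exact ⟨u, h1, hadj⟩
        · exact absurd hadj (hAind u h1 v h2)
  intro u v huv
  -- one endpoint of uv is covered by M
  have hcov : (∃ e ∈ M, u ∈ e) ∨ (∃ e ∈ M, v ∈ e) := by
    by_contra h
    push_neg at h
    obtain ⟨hu, hv⟩ := h
    have hne : s(u, v) ∉ M := fun h => hu _ h (Sym2.mem_mk_left u v)
    have hmatch : IsMatching G (insert s(u, v) M) := by
      constructor
      · intro e he
        rcases Finset.mem_insert.mp he with rfl | he
        · exact G.mem_edgeSet.mpr huv
        · exact hM.1.1 he
      · intro e he f hf hef x hx hxf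
        rcases Finset.mem_insert.mp he with rfl | he
        · rcases Finset.mem_insert.mp hf with rfl | hf
          · exact hef rfl
          · rcases Sym2.mem_iff.mp hx with h | h
            · exact hu f hf (h ▸ hxf)
            · exact hv f hf (h ▸ hxf)
        · rcases Finset.mem_insert.mp hf with rfl | hf
          · rcases Sym2.mem_iff.mp hxf with h | h
            · exact hu e he (h ▸ hx)
            · exact hv e he (h ▸ hx)
          · exact hM.1.2 e he f hf hef x hx hxf
    have := hM.2 _ hmatch (Finset.subset_insert _ _)
    exact hne (this ▸ Finset.mem_insert_self _ _)
  rcases hcov with hu | hv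
  · rcases key u hu with hA | hN
    · exact Or.inr ⟨u, hA, huv⟩
    · exact Or.inl hN
  · rcases key v hv with hA | hN
    · exact Or.inl ⟨v, hA, huv.symm⟩
    · exact Or.inr hN

end PaperRV
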